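/- Let p be an odd prime with p ≡ 3 (mod 4) and n an integer with gcd(n,p)=1. Then ∑_{χ mod p} |G(n,χ;p)|⁴ = (p-1)(3p² - 6p - 1), where G(n,χ;p) = ∑_{a=1}^{p-1} χ(a) e^{2πi n a²/p} and the sum is over all Dirichlet characters χ modulo p. -/

import Mathlib

open Complex Finset

namespace FPM4

variable (p : ℕ) [Fact p.Prime]

noncomputable def ζ : ℂ := Complex.exp (2 * Real.pi * Complex.I / p)

lemma zeta_prim : IsPrimitiveRoot (ζ p) p :=
  Complex.isPrimitiveRoot_exp p (Fact.out : p.Prime).ne_zero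

lemma zeta_pow_p : ζ p ^ p = 1 := (zeta_prim p).pow_eq_one

noncomputable def ψ : AddChar (ZMod p) ℂ := AddChar.zmodChar p (zeta_pow_p p)

lemma psi_apply (a : ZMod p) : ψ p a = ζ p ^ a.val := AddChar.zmodChar_apply _ _

lemma psi_one_eq : ψ p 1 = ζ p := by
  haveI : Fact (1 < p) := ⟨(Fact.out : p.Prime).one_lt⟩
  rw [psi_apply, ZMod.val_one, pow_one]

lemma psi_int (k : ℤ) : ψ p ((k : ZMod p)) = ζ p ^ k := by
  have h1 : ((k : ZMod p)) = k • (1 : ZMod p) := by simp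
  rw [h1, AddChar.map_zsmul_eq_zpow, psi_one_eq]

lemma psi_ne_one : ψ p ≠ 1 := by
  refine AddChar.ne_one_iff.mpr ⟨1, ?_⟩
  rw [psi_one_eq]
  exact (zeta_prim p).ne_one (Fact.out : p.Prime).one_lt

lemma sum_psi : ∑ x : ZMod p, ψ p x = 0 :=
  AddChar.sum_eq_zero_of_ne_one (psi_ne_one p)

lemma sum_psi_mul {u : ZMod p} (hu : u ≠ 0) : ∑ x : ZMod p, ψ p (u * x) = 0 := by
  rw [Fintype.sum_equiv (Equiv.mulLeft₀ u hu) (fun x => ψ p (u * x)) (ψ p) (fun x => rfl)]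
  exact sum_psi p

lemma psi_conj (x : ZMod p) : (starRingEnd ℂ) (ψ p x) = ψ p (-x) := by
  have hz : ‖ζ p‖ = 1 := norm_eq_one_of_pow_eq_one (zeta_pow_p p) (Fact.out : p.Prime).ne_zero
  have h : ‖ψ p x‖ = 1 := by rw [psi_apply, norm_pow, hz, one_pow]
  rw [AddChar.map_neg_eq_inv]
  exact (Complex.inv_eq_conj h).symm

lemma sum_units (f : ZMod p → ℂ) :
    ∑ a : ZMod p, f a = f 0 + ∑ u : (ZMod p)ˣ, f ↑u := by
  rw [← Finset.add_sum_erase _ f (Finset.mem_univ 0)]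
  congr 1
  refine Finset.sum_bij'
    (fun (a : ZMod p) (ha : a ∈ Finset.univ.erase 0) => Units.mk0 a (Finset.mem_erase.mp ha).1)
    (fun (u : (ZMod p)ˣ) _ => (u : ZMod p)) ?_ ?_ ?_ ?_ ?_
  · intros; exact Finset.mem_univ _
  · intro u _; exact Finset.mem_erase.mpr ⟨u.ne_zero, Finset.mem_univ _⟩
  · intro a ha; rfl
  · intro u _; exact Units.ext rfl
  · intro a ha; rfl

lemma ortho (x : ZMod p) :
    ∑ χ : DirichletCharacter ℂ p, χ x = if x = 1 then ((p : ℂ) - 1) else 0 := by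
  rw [DirichletCharacter.sum_characters_eq, Nat.totient_prime (Fact.out : p.Prime)]
  have h1 : ((p - 1 : ℕ) : ℂ) = (p : ℂ) - 1 := by
    have h : 1 ≤ p := (Fact.out : p.Prime).one_lt.le
    rw [Nat.cast_sub h, Nat.cast_one]
  rw [h1]

lemma conj_char (χ : DirichletCharacter ℂ p) (a : (ZMod p)ˣ) :
    (starRingEnd ℂ) (χ ↑a) = χ ↑a⁻¹ := by
  have h1 : χ ↑a * χ ↑a⁻¹ = 1 := by
    rw [← map_mul, ← Units.val_mul]; simp
  have h2 : ‖χ ↑a‖ = 1 := by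
    refine norm_eq_one_of_pow_eq_one (n := Fintype.card (ZMod p)ˣ) ?_ Fintype.card_ne_zero
    rw [← map_pow, ← Units.val_pow_eq_pow_val, pow_card_eq_one, Units.val_one, map_one]
  rw [← Complex.inv_eq_conj h2]
  exact inv_eq_of_mul_eq_one_right h1

noncomputable def τ : ℂ := ∑ z : ZMod p, (quadraticChar (ZMod p) z : ℂ) * ψ p z

lemma sq_expand (hp2 : p ≠ 2) (g : ZMod p → ℂ) :
    ∑ a : ZMod p, g (a ^ 2) = ∑ z : ZMod p, ((quadraticChar (ZMod p) z : ℂ) + 1) * g z := by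
  have hF : ringChar (ZMod p) ≠ 2 := by rw [ZMod.ringChar_zmod_n]; exact hp2
  rw [Finset.sum_comp g (fun a : ZMod p => a ^ 2)]
  rw [Finset.sum_subset (Finset.subset_univ (Finset.univ.image (fun a : ZMod p => a ^ 2)))
    (fun z _ hz => by
      have : (Finset.univ.filter (fun a : ZMod p => a ^ 2 = z)).card = 0 := by
        rw [Finset.card_eq_zero]
        ext a
        simp only [Finset.mem_filter, Finset.mem_univ, true_and, Finset.notMem_empty, iff_false]
        intro h
        exact hz (Finset.mem_image.mpr ⟨a, Finset.mem_univ a, h⟩)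
      rw [this, zero_smul])]
  refine Finset.sum_congr rfl fun z _ => ?_
  have hcard := quadraticChar_card_sqrts hF z
  rw [Set.toFinset_setOf] at hcard
  rw [nsmul_eq_mul]
  have : ((Finset.univ.filter (fun a : ZMod p => a ^ 2 = z)).card : ℂ)
      = (quadraticChar (ZMod p) z : ℂ) + 1 := by exact_mod_cast hcard
  rw [this]

lemma quadChar_inv {u : ZMod p} (hp2 : p ≠ 2) (hu : u ≠ 0) :
    quadraticChar (ZMod p) u⁻¹ = quadraticChar (ZMod p) u := by
  have h2 : quadraticChar (ZMod p) u * quadraticChar (ZMod p) u = 1 := by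
    rw [← sq]; exact quadraticChar_sq_one hu
  have h3 : quadraticChar (ZMod p) u⁻¹ * quadraticChar (ZMod p) u = 1 := by
    rw [← map_mul, inv_mul_cancel₀ hu, map_one]
  calc quadraticChar (ZMod p) u⁻¹
      = quadraticChar (ZMod p) u⁻¹ * (quadraticChar (ZMod p) u * quadraticChar (ZMod p) u) := by
        rw [h2, mul_one]
    _ = (quadraticChar (ZMod p) u⁻¹ * quadraticChar (ZMod p) u) * quadraticChar (ZMod p) u := by
        ring
    _ = quadraticChar (ZMod p) u := by rw [h3, one_mul]

lemma Sfull (hp2 : p ≠ 2) (u : ZMod p) :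
    ∑ a : ZMod p, ψ p (u * a ^ 2)
      = (quadraticChar (ZMod p) u : ℂ) * τ p + (if u = 0 then (p : ℂ) else 0) := by
  have hF : ringChar (ZMod p) ≠ 2 := by rw [ZMod.ringChar_zmod_n]; exact hp2
  rw [sq_expand p hp2 (fun z => ψ p (u * z))]
  simp only [add_mul, one_mul]
  rw [Finset.sum_add_distrib]
  congr 1
  · by_cases hu : u = 0
    · simp only [hu, zero_mul, AddChar.map_zero_eq_one, mul_one]
      rw [show ∑ z : ZMod p, ((quadraticChar (ZMod p) z : ℤ) : ℂ)
          = ((∑ z : ZMod p, quadraticChar (ZMod p) z : ℤ) : ℂ) by push_cast; rfl]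
      rw [quadraticChar_sum_zero hF]
      simp
    · rw [Fintype.sum_equiv (Equiv.mulLeft₀ u hu)
        (fun z => (quadraticChar (ZMod p) z : ℂ) * ψ p (u * z))
        (fun w => (quadraticChar (ZMod p) (u⁻¹ * w) : ℂ) * ψ p w)
        (fun z => by simp only [Equiv.mulLeft₀_apply, inv_mul_cancel_left₀ hu])]
      simp_rw [map_mul, quadChar_inv p hp2 hu]
      push_cast
      simp_rw [mul_assoc]
      rw [← Finset.mul_sum]
      rfl
  · by_cases hu : u = 0
    · subst hu
      rw [if_pos rfl]
      simp only [zero_mul, AddChar.map_zero_eq_one]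
      rw [Finset.sum_const, Finset.card_univ, ZMod.card, nsmul_eq_mul, mul_one]
    · rw [sum_psi_mul p hu, if_neg hu]

lemma inner_c (hp2 : p ≠ 2) (u : ZMod p) :
    ∑ c : (ZMod p)ˣ, ψ p (u * (c : ZMod p) ^ 2)
      = (quadraticChar (ZMod p) u : ℂ) * τ p + (if u = 0 then (p : ℂ) else 0) - 1 := by
  have h := sum_units p (fun a => ψ p (u * a ^ 2))
  rw [Sfull p hp2 u] at h
  have h0 : ψ p (u * (0 : ZMod p) ^ 2) = 1 := by
    norm_num
  rw [h0] at h
  linear_combination -h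

lemma Kzero (hp2 : p ≠ 2) (h4 : p % 4 = 3) :
    ∑ x : (ZMod p)ˣ, quadraticChar (ZMod p) ((x : ZMod p) ^ 2 - 1) = 0 := by
  have hF : ringChar (ZMod p) ≠ 2 := by rw [ZMod.ringChar_zmod_n]; exact hp2
  have hm1 : quadraticChar (ZMod p) (-1) = -1 := by
    rw [quadraticChar_neg_one hF, ZMod.card, ZMod.χ₄_nat_eq_if_mod_four]
    have h2 : p % 2 = 1 := by omega
    rw [if_neg (by omega), if_neg (by omega)]
  have key : ∀ x : (ZMod p)ˣ,
      quadraticChar (ZMod p) (((x⁻¹ : (ZMod p)ˣ) : ZMod p) ^ 2 - 1)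
        = - quadraticChar (ZMod p) ((x : ZMod p) ^ 2 - 1) := by
    intro x
    have hx : ((x : ZMod p)) ≠ 0 := x.ne_zero
    have h1 : ((x⁻¹ : (ZMod p)ˣ) : ZMod p) ^ 2 - 1
        = (-1) * (((x⁻¹ : (ZMod p)ˣ) : ZMod p) ^ 2 * ((x : ZMod p) ^ 2 - 1)) := by
      rw [Units.val_inv_eq_inv_val]
      field_simp
      ring
    rw [h1, map_mul, map_mul, hm1, quadraticChar_sq_one' (a := ((x⁻¹ : (ZMod p)ˣ) : ZMod p))
      (x⁻¹).ne_zero]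
    ring
  have hS : ∑ x : (ZMod p)ˣ, quadraticChar (ZMod p) ((x : ZMod p) ^ 2 - 1)
      = ∑ x : (ZMod p)ˣ, quadraticChar (ZMod p) (((x⁻¹ : (ZMod p)ˣ) : ZMod p) ^ 2 - 1) := by
    exact (Fintype.sum_equiv (Equiv.inv (ZMod p)ˣ)
      (fun x => quadraticChar (ZMod p) (((x⁻¹ : (ZMod p)ˣ) : ZMod p) ^ 2 - 1))
      (fun x => quadraticChar (ZMod p) ((x : ZMod p) ^ 2 - 1)) (fun x => rfl)).symm
  rw [Finset.sum_congr rfl (fun x _ => key x)] at hS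
  rw [Finset.sum_neg_distrib] at hS
  linarith

lemma card_sq_one (hp3 : 3 ≤ p) :
    (Finset.univ.filter fun x : (ZMod p)ˣ => (x : ZMod p) ^ 2 = 1).card = 2 := by
  haveI : Fact (2 < p) := ⟨by omega⟩
  have hset : (Finset.univ.filter fun x : (ZMod p)ˣ => (x : ZMod p) ^ 2 = 1)
      = {1, -1} := by
    ext u
    simp only [Finset.mem_filter, Finset.mem_univ, true_and, Finset.mem_insert,
      Finset.mem_singleton]
    rw [sq, mul_self_eq_one_iff]
    constructor
    · rintro (h | h)
      · exact Or.inl (Units.ext h)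
      · refine Or.inr (Units.ext ?_)
        simpa using h
    · rintro (h | h) <;> subst h <;> simp
  rw [hset, Finset.card_insert_of_notMem, Finset.card_singleton]
  simp only [Finset.mem_singleton]
  intro h
  have h2 := congrArg (Units.val) h
  simp only [Units.val_one, Units.val_neg] at h2
  exact ZMod.neg_one_ne_one h2.symm

lemma expand4 (F H : (ZMod p)ˣ → ℂ) :
    (∑ a, F a) ^ 2 * (∑ a, H a) ^ 2
      = ∑ a, ∑ c, ∑ b, ∑ d, F a * F b * (H c * H d) := by
  rw [sq, sq, Finset.sum_mul_sum, Finset.sum_mul_sum, Finset.sum_mul_sum]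
  refine Finset.sum_congr rfl fun a _ => ?_
  refine Finset.sum_congr rfl fun c _ => ?_
  rw [Finset.sum_mul_sum]

lemma reindex1 (c : (ZMod p)ˣ) (f : (ZMod p)ˣ → ℂ) : ∑ a, f a = ∑ x, f (c * x) :=
  (Fintype.sum_equiv (Equiv.mulLeft c) (fun x => f (c * x)) f (fun _ => rfl)).symm

lemma reindex3 (f : (ZMod p)ˣ → (ZMod p)ˣ → (ZMod p)ˣ → ℂ) :
    ∑ c, ∑ a, ∑ b, f c a b = ∑ c, ∑ x, ∑ y, f c (c * x) (c * y) :=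
  Finset.sum_congr rfl fun c _ =>
    (reindex1 p c _).trans (Finset.sum_congr rfl fun x _ => reindex1 p c _)

end FPM4

open FPM4 in
theorem fourth_power_mean_three_mod_four (p : ℕ) [Fact p.Prime] (hp2 : p ≠ 2)
    (h4 : p % 4 = 3) (n : ℤ) (hn : Int.gcd n p = 1) :
    ∑ χ : DirichletCharacter ℂ p,
        (‖∑ a : ZMod p, χ a *
          Complex.exp (2 * Real.pi * I * n * (a.val : ℂ) ^ 2 / p)‖) ^ 4
      = ((p : ℝ) - 1) * (3 * (p : ℝ) ^ 2 - 6 * p - 1) := by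
  classical
  have hp : p.Prime := Fact.out
  have hp3 : 3 ≤ p := by have := hp.two_le; omega
  set ν : ZMod p := ((n : ℤ) : ZMod p) with hνdef
  have hν0 : ν ≠ 0 := by
    intro h
    have hdvd : (p : ℤ) ∣ n := (ZMod.intCast_zmod_eq_zero_iff_dvd n p).mp h
    have hg : (p : ℤ) ∣ (Int.gcd n p : ℤ) := Int.dvd_coe_gcd hdvd dvd_rfl
    rw [hn] at hg
    have h1 : (p : ℤ) ≤ 1 := Int.le_of_dvd one_pos hg
    omega
  have hm0 : -ν ≠ 0 := neg_ne_zero.mpr hν0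
  apply Complex.ofReal_injective
  push_cast
  have hterm : ∀ a : ZMod p,
      Complex.exp (2 * (Real.pi : ℂ) * I * (n : ℂ) * ((a.val : ℂ)) ^ 2 / (p : ℂ))
        = ψ p (ν * a ^ 2) := by
    intro a
    have h1 : ν * a ^ 2 = ((n * (a.val : ℤ) ^ 2 : ℤ) : ZMod p) := by
      push_cast
      rw [ZMod.natCast_val, ZMod.cast_id]
    rw [h1, psi_int, show ζ p = Complex.exp (2 * Real.pi * Complex.I / p) from rfl,
      ← Complex.exp_int_mul]
    congr 1
    push_cast
    ring
  simp only [hterm]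
  have habs4 : ∀ z : ℂ, ((‖z‖ : ℝ) : ℂ) ^ 4 = z ^ 2 * ((starRingEnd ℂ) z) ^ 2 := by
    intro z
    have h2 : ((‖z‖ : ℝ) : ℂ) ^ 2 = z * (starRingEnd ℂ) z := by
      rw [Complex.mul_conj]
      norm_cast
      exact Complex.sq_norm z
    calc ((‖z‖ : ℝ) : ℂ) ^ 4 = (((‖z‖ : ℝ) : ℂ) ^ 2) ^ 2 := by ring
      _ = (z * (starRingEnd ℂ) z) ^ 2 := by rw [h2]
      _ = z ^ 2 * ((starRingEnd ℂ) z) ^ 2 := by ring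
  simp only [habs4]
  have hG : ∀ χ : DirichletCharacter ℂ p,
      (∑ a : ZMod p, χ a * ψ p (ν * a ^ 2))
        = ∑ a : (ZMod p)ˣ, χ ↑a * ψ p (ν * (↑a : ZMod p) ^ 2) := by
    intro χ
    rw [sum_units p (fun a => χ a * ψ p (ν * a ^ 2))]
    simp [MulChar.map_zero]
  simp only [hG]
  have hGc : ∀ χ : DirichletCharacter ℂ p,
      (starRingEnd ℂ) (∑ a : (ZMod p)ˣ, χ ↑a * ψ p (ν * (↑a : ZMod p) ^ 2))
        = ∑ a : (ZMod p)ˣ, χ ↑a⁻¹ * ψ p (-(ν * (↑a : ZMod p) ^ 2)) := by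
    intro χ
    rw [map_sum]
    exact Finset.sum_congr rfl fun a _ => by rw [map_mul, conj_char, psi_conj]
  simp only [hGc]
  have hexp : ∀ χ : DirichletCharacter ℂ p,
      (∑ a : (ZMod p)ˣ, χ ↑a * ψ p (ν * (↑a : ZMod p) ^ 2)) ^ 2
        * (∑ a : (ZMod p)ˣ, χ ↑a⁻¹ * ψ p (-(ν * (↑a : ZMod p) ^ 2))) ^ 2
      = ∑ a : (ZMod p)ˣ, ∑ c : (ZMod p)ˣ, ∑ b : (ZMod p)ˣ, ∑ d : (ZMod p)ˣ,
          (χ ↑a * ψ p (ν * (↑a : ZMod p) ^ 2)) * (χ ↑b * ψ p (ν * (↑b : ZMod p) ^ 2))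
            * ((χ ↑c⁻¹ * ψ p (-(ν * (↑c : ZMod p) ^ 2)))
              * (χ ↑d⁻¹ * ψ p (-(ν * (↑d : ZMod p) ^ 2)))) := fun χ =>
    expand4 p (fun a : (ZMod p)ˣ => χ ↑a * ψ p (ν * (↑a : ZMod p) ^ 2))
      (fun a : (ZMod p)ˣ => χ ↑a⁻¹ * ψ p (-(ν * (↑a : ZMod p) ^ 2)))
  simp only [hexp]
  rw [Finset.sum_comm]
  conv_lhs => enter [2, a]; rw [Finset.sum_comm]
  conv_lhs => enter [2, a, 2, c]; rw [Finset.sum_comm]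
  conv_lhs => enter [2, a, 2, c, 2, b]; rw [Finset.sum_comm]
  have hsum1 : ∀ a b c d : (ZMod p)ˣ,
      (∑ χ : DirichletCharacter ℂ p,
        (χ ↑a * ψ p (ν * (↑a : ZMod p) ^ 2)) * (χ ↑b * ψ p (ν * (↑b : ZMod p) ^ 2))
          * ((χ ↑c⁻¹ * ψ p (-(ν * (↑c : ZMod p) ^ 2)))
            * (χ ↑d⁻¹ * ψ p (-(ν * (↑d : ZMod p) ^ 2)))))
      = if d = c⁻¹ * (a * b) then
          ((p : ℂ) - 1) * ψ p (ν * (↑a : ZMod p) ^ 2 + (ν * (↑b : ZMod p) ^ 2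
            + (-(ν * (↑c : ZMod p) ^ 2) + -(ν * (↑d : ZMod p) ^ 2))))
        else 0 := by
    intro a b c d
    have h1 : ∀ χ : DirichletCharacter ℂ p,
        (χ ↑a * ψ p (ν * (↑a : ZMod p) ^ 2)) * (χ ↑b * ψ p (ν * (↑b : ZMod p) ^ 2))
          * ((χ ↑c⁻¹ * ψ p (-(ν * (↑c : ZMod p) ^ 2)))
            * (χ ↑d⁻¹ * ψ p (-(ν * (↑d : ZMod p) ^ 2))))
        = χ ((↑a : ZMod p) * ↑b * ↑c⁻¹ * ↑d⁻¹)
            * ψ p (ν * (↑a : ZMod p) ^ 2 + (ν * (↑b : ZMod p) ^ 2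
              + (-(ν * (↑c : ZMod p) ^ 2) + -(ν * (↑d : ZMod p) ^ 2)))) := by
      intro χ
      have hχm : χ ((↑a : ZMod p) * ↑b * ↑c⁻¹ * ↑d⁻¹)
          = χ ↑a * χ ↑b * χ ↑c⁻¹ * χ ↑d⁻¹ := by
        rw [map_mul χ, map_mul χ, map_mul χ]
      have hψ4 : ψ p (ν * (↑a : ZMod p) ^ 2 + (ν * (↑b : ZMod p) ^ 2
            + (-(ν * (↑c : ZMod p) ^ 2) + -(ν * (↑d : ZMod p) ^ 2))))
          = ψ p (ν * (↑a : ZMod p) ^ 2) * (ψ p (ν * (↑b : ZMod p) ^ 2)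
            * (ψ p (-(ν * (↑c : ZMod p) ^ 2)) * ψ p (-(ν * (↑d : ZMod p) ^ 2)))) := by
        rw [AddChar.map_add_eq_mul, AddChar.map_add_eq_mul, AddChar.map_add_eq_mul]
      rw [hχm, hψ4]
      ring
    rw [Finset.sum_congr rfl fun χ _ => h1 χ, ← Finset.sum_mul, ortho]
    have hcond : ((↑a : ZMod p) * ↑b * ↑c⁻¹ * ↑d⁻¹ = 1) ↔ (d = c⁻¹ * (a * b)) := by
      have hval : ((↑a : ZMod p) * ↑b * ↑c⁻¹ * ↑d⁻¹) = ((a * b * c⁻¹ * d⁻¹ : (ZMod p)ˣ) : ZMod p) := by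
        rw [Units.val_mul, Units.val_mul, Units.val_mul]
      rw [hval, Units.val_eq_one]
      constructor
      · intro h2
        exact (mul_inv_eq_one.mp h2).symm.trans (mul_comm (a * b) c⁻¹)
      · intro h2
        subst h2
        exact mul_inv_eq_one.mpr (mul_comm (a * b) c⁻¹)
    simp only [hcond, ite_mul, zero_mul]
  simp only [hsum1]
  simp only [Finset.sum_ite_eq', Finset.mem_univ, if_true]
  rw [Finset.sum_comm]
  rw [reindex3]
  have harg : ∀ c x y : (ZMod p)ˣ,
      ψ p (ν * (↑(c * x) : ZMod p) ^ 2 + (ν * (↑(c * y) : ZMod p) ^ 2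
        + (-(ν * (↑c : ZMod p) ^ 2) + -(ν * (↑(c⁻¹ * (c * x * (c * y))) : ZMod p) ^ 2))))
      = ψ p (-ν * (↑c : ZMod p) ^ 2
          * (((↑x : ZMod p) ^ 2 - 1) * ((↑y : ZMod p) ^ 2 - 1))) := by
    intro c x y
    congr 1
    have hc : ((c : ZMod p)) ≠ 0 := c.ne_zero
    simp only [Units.val_mul, Units.val_inv_eq_inv_val]
    field_simp
    ring
  simp only [harg]
  simp only [← Finset.mul_sum]
  conv_lhs => enter [2]; rw [Finset.sum_comm]
  conv_lhs => enter [2, 2, x]; rw [Finset.sum_comm]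
  have hinner : ∀ x y : (ZMod p)ˣ,
      ∑ c : (ZMod p)ˣ, ψ p (-ν * (↑c : ZMod p) ^ 2
          * (((↑x : ZMod p) ^ 2 - 1) * ((↑y : ZMod p) ^ 2 - 1)))
      = (quadraticChar (ZMod p) (-ν * (((↑x : ZMod p) ^ 2 - 1) * ((↑y : ZMod p) ^ 2 - 1))) : ℂ)
            * τ p
          + (if -ν * (((↑x : ZMod p) ^ 2 - 1) * ((↑y : ZMod p) ^ 2 - 1)) = 0 then (p : ℂ) else 0)
          - 1 := by
    intro x y
    rw [Finset.sum_congr rfl fun (c : (ZMod p)ˣ) _ => congrArg (ψ p)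
      (by ring : -ν * (↑c : ZMod p) ^ 2 * (((↑x : ZMod p) ^ 2 - 1) * ((↑y : ZMod p) ^ 2 - 1))
        = (-ν * (((↑x : ZMod p) ^ 2 - 1) * ((↑y : ZMod p) ^ 2 - 1))) * (↑c : ZMod p) ^ 2)]
    exact inner_c p hp2 _
  simp only [hinner]
  simp only [Finset.sum_sub_distrib, Finset.sum_add_distrib]
  have hsum0 : (∑ x : (ZMod p)ˣ, (quadraticChar (ZMod p) ((↑x : ZMod p) ^ 2 - 1) : ℂ)) = 0 := by
    rw [show (∑ x : (ZMod p)ˣ, (quadraticChar (ZMod p) ((↑x : ZMod p) ^ 2 - 1) : ℂ))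
        = ((∑ x : (ZMod p)ˣ, quadraticChar (ZMod p) ((↑x : ZMod p) ^ 2 - 1) : ℤ) : ℂ) by
      push_cast; rfl]
    rw [Kzero p hp2 h4, Int.cast_zero]
  have hA : ∀ x : (ZMod p)ˣ,
      ∑ y : (ZMod p)ˣ,
        (quadraticChar (ZMod p) (-ν * (((↑x : ZMod p) ^ 2 - 1) * ((↑y : ZMod p) ^ 2 - 1))) : ℂ)
          * τ p = 0 := by
    intro x
    have h1 : ∀ y : (ZMod p)ˣ,
        (quadraticChar (ZMod p) (-ν * (((↑x : ZMod p) ^ 2 - 1) * ((↑y : ZMod p) ^ 2 - 1))) : ℂ)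
            * τ p
        = ((quadraticChar (ZMod p) (-ν * ((↑x : ZMod p) ^ 2 - 1)) : ℂ) * τ p)
            * (quadraticChar (ZMod p) ((↑y : ZMod p) ^ 2 - 1) : ℂ) := by
      intro y
      rw [show -ν * (((↑x : ZMod p) ^ 2 - 1) * ((↑y : ZMod p) ^ 2 - 1))
          = (-ν * ((↑x : ZMod p) ^ 2 - 1)) * ((↑y : ZMod p) ^ 2 - 1) from by ring, map_mul]
      push_cast
      ring
    rw [Finset.sum_congr rfl fun (y : (ZMod p)ˣ) _ => h1 y, ← Finset.mul_sum, hsum0, mul_zero]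
  rw [Finset.sum_congr rfl fun (x : (ZMod p)ˣ) _ => hA x, Finset.sum_const_zero]
  have hcond2 : ∀ x y : (ZMod p)ˣ,
      (-ν * (((↑x : ZMod p) ^ 2 - 1) * ((↑y : ZMod p) ^ 2 - 1)) = 0)
        ↔ (((↑x : ZMod p) ^ 2 = 1) ∨ ((↑y : ZMod p) ^ 2 = 1)) := by
    intro x y
    rw [mul_eq_zero, mul_eq_zero]
    simp [hm0, sub_eq_zero]
  simp only [hcond2]
  have hrow : ∀ x : (ZMod p)ˣ,
      (∑ y : (ZMod p)ˣ, if ((↑x : ZMod p) ^ 2 = 1) ∨ ((↑y : ZMod p) ^ 2 = 1) then (p : ℂ) else 0)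
      = if ((↑x : ZMod p) ^ 2 = 1) then ((p - 1 : ℕ) : ℂ) * p else 2 * p := by
    intro x
    by_cases hx : ((↑x : ZMod p) ^ 2 = 1)
    · rw [if_pos hx, Finset.sum_congr rfl fun (y : (ZMod p)ˣ) _ => if_pos (Or.inl hx),
        Finset.sum_const, Finset.card_univ, ZMod.card_units, nsmul_eq_mul]
    · rw [if_neg hx,
        Finset.sum_congr rfl fun (y : (ZMod p)ˣ) _ =>
          (by simp [hx] : (if ((↑x : ZMod p) ^ 2 = 1) ∨ ((↑y : ZMod p) ^ 2 = 1) then (p : ℂ) else 0)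
            = if ((↑y : ZMod p) ^ 2 = 1) then (p : ℂ) else 0),
        Finset.sum_ite, Finset.sum_const, Finset.sum_const_zero, add_zero,
        card_sq_one p hp3, nsmul_eq_mul]
      norm_num
  rw [Finset.sum_congr rfl fun (x : (ZMod p)ˣ) _ => hrow x]
  rw [Finset.sum_ite, Finset.sum_const, Finset.sum_const, card_sq_one p hp3]
  have hcardneg : (Finset.univ.filter fun x : (ZMod p)ˣ => ¬((↑x : ZMod p) ^ 2 = 1)).card
      = (p - 1) - 2 := by
    have h := Finset.card_filter_add_card_filter_not
      (s := (Finset.univ : Finset (ZMod p)ˣ)) (p := fun x : (ZMod p)ˣ => (↑x : ZMod p) ^ 2 = 1)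
    rw [card_sq_one p hp3, Finset.card_univ, ZMod.card_units] at h
    omega
  rw [hcardneg]
  rw [Finset.sum_const, Finset.sum_const, Finset.card_univ, ZMod.card_units]
  have hc1 : ((p - 1 : ℕ) : ℂ) = (p : ℂ) - 1 := by
    rw [Nat.cast_sub hp.one_lt.le, Nat.cast_one]
  have hc2 : (((p - 1) - 2 : ℕ) : ℂ) = (p : ℂ) - 3 := by
    rw [Nat.cast_sub (by omega), Nat.cast_sub hp.one_lt.le]
    push_cast
    ring
  simp only [nsmul_eq_mul, hc1, hc2, smul_eq_mul]
  push_cast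
  ring
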